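/- Let V be a ℚ-vector space with a linear action of SL₂(ℤ), let u, w be as above, suppose (u-1)² = 0 in End(V), and suppose the central element i = w² acts as -1 on V. Let x = u - 1 (so x = log u since x² = 0). Then the identity xw + wx = -1 holds in End(V). -/

import Mathlib

open Matrix

def u : Matrix.SpecialLinearGroup (Fin 2) ℤ :=
  ⟨!![1, 1; 0, 1], by simp [Matrix.det_fin_two_of]⟩

def w : Matrix.SpecialLinearGroup (Fin 2) ℤ :=
  ⟨!![0, 1; -1, 0], by simp [Matrix.det_fin_two_of]⟩

/-- If `(u-1)² = 0` and the central element `i = w²` acts as `-1`, then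
`xw + wx = -1` in `End(V)`, where `x = u - 1`. -/
theorem quadratic_minus_identity
    (V : Type*) [AddCommGroup V] [Module ℚ V]
    (ρ : Representation ℚ (Matrix.SpecialLinearGroup (Fin 2) ℤ) V)
    (hquad : (ρ u - 1) ^ 2 = 0)
    (hi : ρ (w ^ 2) = -1) :
    (ρ u - 1) * ρ w + ρ w * (ρ u - 1) = -1 := by
  have hw2 : ρ w * ρ w = -1 := by
    rw [pow_two, _root_.map_mul] at hi; exact hi
  have hg : (u * w) * (u * w) * (u * w) = 1 := by
    ext i j
    simp only [Matrix.SpecialLinearGroup.coe_mul]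
    fin_cases i <;> fin_cases j <;>
      simp [u, w, Matrix.mul_apply, Fin.sum_univ_succ]
  have hPg : (ρ u * ρ w) * (ρ u * ρ w) * (ρ u * ρ w) = 1 := by
    rw [← _root_.map_mul, ← _root_.map_mul, ← _root_.map_mul, hg, _root_.map_one]
  set X : Module.End ℚ V := ρ u - 1 with hXdef
  set W : Module.End ℚ V := ρ w with hWdef
  have hu : ρ u = X + 1 := by rw [hXdef, sub_add_cancel]
  have h1 : X * X = 0 := by rw [← pow_two]; exact hquad
  have h2 : W * W + 1 = 0 := by rw [hw2, neg_add_cancel]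
  set P : Module.End ℚ V := (X + 1) * W with hPdef
  have h3 : P * P * P - 1 = 0 := by
    rw [hPdef, ← hu, sub_eq_zero, hPg]
  set C : Module.End ℚ V := X * W + W * X + 1 with hCdef
  -- C commutes with X
  have t1 : X * C - C * X = 0 := by
    have cert : X * C - C * X = (X * X) * W - W * (X * X) := by
      rw [hCdef]; noncomm_ring
    rw [h1] at cert
    simpa using cert
  -- C commutes with W
  have t2 : W * C - C * W = 0 := by
    have cert : W * C - C * W = (W * W + 1) * X - X * (W * W + 1) := by
      rw [hCdef]; noncomm_ring
    rw [h2] at cert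
    simpa using cert
  -- key consequence of (uw)^3 = 1
  have t3 : C * C * P - 2 * (C * P) - C = 0 := by
    have cert : C * C * P - 2 * (C * P) - C =
        W * (X * X) * (W * W) + W * (X * X) * (W * X * W)
          + (W * X * W) * (X * X) * W + (X * W * W) * (X * X) * W
          - (W * W + 1) * W - (W * W + 1) * (X * W)
          - (W * X) * (W * W + 1) - X * (W * W + 1) * W
          + (P * P * P - 1) := by
      rw [hCdef, hPdef]; noncomm_ring
    rw [h1, h2, h3] at cert
    simpa using cert
  have t4 : C * W + (C * C - 2 * C) * (X + 1) = 0 := by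
    have cert : C * W + (C * C - 2 * C) * (X + 1) =
        -((C * C * P - 2 * (C * P) - C) * W)
          + (C * C - 2 * C) * (X + 1) * (W * W + 1) := by
      rw [hPdef]; noncomm_ring
    rw [t3, h2] at cert
    simpa using cert
  have t5 : C * X * W + (C * C - 2 * C) * X = 0 := by
    have cert : C * X * W + (C * C - 2 * C) * X =
        X * (C * W + (C * C - 2 * C) * (X + 1))
          - (C * C - 2 * C) * (X * X)
          - (X * C - C * X) * W
          - (C * (X * C - C * X) + (X * C - C * X) * C
              - 2 * (X * C - C * X)) * (X + 1) := by
      noncomm_ring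
    rw [t4, h1, t1] at cert
    simpa using cert
  have t6 : C * W * X + (C * C - 2 * C) * X = 0 := by
    have cert : C * W * X + (C * C - 2 * C) * X =
        (C * W + (C * C - 2 * C) * (X + 1)) * X
          - (C * C - 2 * C) * (X * X) := by
      noncomm_ring
    rw [t4, h1] at cert
    simpa using cert
  have t7 : C * (C - 1) + 2 * ((C * C - 2 * C) * X) = 0 := by
    have cert : C * (C - 1) + 2 * ((C * C - 2 * C) * X) =
        (C * X * W + (C * C - 2 * C) * X)
          + (C * W * X + (C * C - 2 * C) * X) := by
      rw [hCdef]; noncomm_ring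
    rw [t5, t6] at cert
    simpa using cert
  have t8 : C * (C - 1) * X = 0 := by
    have cert : C * (C - 1) * X =
        (C * (C - 1) + 2 * ((C * C - 2 * C) * X)) * X
          - 2 * ((C * C - 2 * C) * (X * X)) := by
      noncomm_ring
    rw [t7, h1] at cert
    simpa using cert
  have t9 : C * (C - 1) * (C - 1) = 0 := by
    have cert : C * (C - 1) * (C - 1) =
        (C * (C - 1) * X) * W + W * (C * (C - 1) * X)
          - ((W * C - C * W) * C + C * (W * C - C * W)
              - (W * C - C * W)) * X := by
      nth_rewrite 3 [hCdef]
      noncomm_ring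
    rw [t8, t2] at cert
    simpa using cert
  have t10a : (C * C - 2 * C) * (C * C - 2 * C) * P * P - C * C = 0 := by
    have cert : (C * C - 2 * C) * (C * C - 2 * C) * P * P - C * C =
        (C * C - 2 * C) * (C * C * P - 2 * (C * P) - C) * P
          + C * (C * C * P - 2 * (C * P) - C) := by
      noncomm_ring
    rw [t3] at cert
    simpa using cert
  have t10b : (C * C - 2 * C) * (C * C - 2 * C) * (C * C - 2 * C) * (P * P * P)
      - C * C * C = 0 := by
    have cert : (C * C - 2 * C) * (C * C - 2 * C) * (C * C - 2 * C) * (P * P * P)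
        - C * C * C =
        (C * C - 2 * C)
            * ((C * C - 2 * C) * (C * C - 2 * C) * P * P - C * C) * P
          + C * C * (C * C * P - 2 * (C * P) - C) := by
      noncomm_ring
    rw [t10a, t3] at cert
    simpa using cert
  have t10 : (C * C - 2 * C) * (C * C - 2 * C) * (C * C - 2 * C)
      - C * C * C = 0 := by
    have cert : (C * C - 2 * C) * (C * C - 2 * C) * (C * C - 2 * C)
        - C * C * C =
        ((C * C - 2 * C) * (C * C - 2 * C) * (C * C - 2 * C) * (P * P * P)
            - C * C * C)
          - (C * C - 2 * C) * (C * C - 2 * C) * (C * C - 2 * C)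
              * (P * P * P - 1) := by
      noncomm_ring
    rw [t10b, h3] at cert
    simpa using cert
  -- final polynomial arithmetic in the commuting element C
  have h4C : (4 : Module.End ℚ V) * C = 0 := by
    have cert : (4 : Module.End ℚ V) * C =
        (4 + 8 * C - 15 * (C * C) + 7 * (C * C * C) - C * C * C * C)
            * (C * (C - 1) * (C - 1))
          + (C - 3)
            * ((C * C - 2 * C) * (C * C - 2 * C) * (C * C - 2 * C)
                - C * C * C) := by
      noncomm_ring
    rw [t9, t10] at cert
    simpa using cert
  have h4Q : (4 : ℚ) • C = 0 := by
    have h' : ((4 : ℕ) : Module.End ℚ V) * C = 0 := by exact_mod_cast h4C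
    rw [← nsmul_eq_mul, ← Nat.cast_smul_eq_nsmul ℚ] at h'
    exact_mod_cast h'
  have hC0 : C = 0 := by
    rcases smul_eq_zero.mp h4Q with h | h
    · norm_num at h
    · exact h
  have hfin : X * W + W * X + 1 = 0 := by rw [← hCdef]; exact hC0
  rwa [add_eq_zero_iff_eq_neg] at hfin
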